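/- Let λ > 0, A > 1, and let (θ_n) be a sequence of reals. Define α_0 = A and α_{n+1} = λ^{-1/(n+1)}·(λα_n^{n+1} + ⟨θ_{n+1} − λα_n^{n+1}⟩)^{1/(n+1)}, where ⟨x⟩ denotes the fractional part of x. Then the sequence (α_n) is nondecreasing, and for all n ≥ 0 and all 1 ≤ m ≤ n, α_{n+1}^m − α_n^m < λ^{-1}·A^{m−n−1}. -/

import Mathlib

theorem alpha_seq_monotone_and_diff_bound
    (lam A : ℝ) (hlam : 0 < lam) (hA : 1 < A)
    (θ : ℕ → ℝ) (α : ℕ → ℝ)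
    (h0 : α 0 = A)
    (hrec : ∀ n : ℕ, α (n + 1) =
      lam ^ (-(1 / (n + 1 : ℝ))) *
        (lam * α n ^ (n + 1) +
          Int.fract (θ (n + 1) - lam * α n ^ (n + 1))) ^ (1 / (n + 1 : ℝ))) :
    Monotone α ∧
      ∀ n m : ℕ, 1 ≤ m → m ≤ n →
        α (n + 1) ^ m - α n ^ m < lam⁻¹ * A ^ ((m : ℤ) - n - 1) := by
  have hnne : ∀ n : ℕ, 0 < α n → 0 ≤ α (n + 1) := by
    intro n hpos
    have hB : 0 ≤ lam * α n ^ (n + 1) + Int.fract (θ (n + 1) - lam * α n ^ (n + 1)) := by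
      have := Int.fract_nonneg (θ (n + 1) - lam * α n ^ (n + 1))
      positivity
    rw [hrec n]
    exact mul_nonneg (Real.rpow_nonneg hlam.le _) (Real.rpow_nonneg hB _)
  have key : ∀ n : ℕ, 0 < α n →
      α (n + 1) ^ (n + 1) = α n ^ (n + 1) +
        Int.fract (θ (n + 1) - lam * α n ^ (n + 1)) / lam := by
    intro n hpos
    set f := Int.fract (θ (n + 1) - lam * α n ^ (n + 1)) with hfdef
    have hf0 : 0 ≤ f := Int.fract_nonneg _
    have hB : 0 < lam * α n ^ (n + 1) + f := by positivity
    have hk : ((n : ℝ) + 1) ≠ 0 := by positivity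
    rw [hrec n, mul_pow,
        ← Real.rpow_natCast (lam ^ (-(1 / (n + 1 : ℝ)))) (n + 1),
        ← Real.rpow_natCast ((lam * α n ^ (n + 1) + f) ^ (1 / (n + 1 : ℝ))) (n + 1),
        ← Real.rpow_mul hlam.le, ← Real.rpow_mul hB.le]
    push_cast
    rw [neg_mul, one_div_mul_cancel hk, Real.rpow_neg_one, Real.rpow_one]
    field_simp
  have hAn : ∀ n, A ≤ α n := by
    intro n
    induction n with
    | zero => rw [h0]
    | succ n ih =>
      have hpos : 0 < α n := lt_of_lt_of_le (by linarith) ih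
      have hstep := key n hpos
      have hf0 : 0 ≤ Int.fract (θ (n + 1) - lam * α n ^ (n + 1)) := Int.fract_nonneg _
      have hdiv : 0 ≤ Int.fract (θ (n + 1) - lam * α n ^ (n + 1)) / lam :=
        div_nonneg hf0 hlam.le
      have hle : α n ^ (n + 1) ≤ α (n + 1) ^ (n + 1) := by
        rw [hstep]; linarith
      have := le_of_pow_le_pow_left₀ (Nat.succ_ne_zero n) (hnne n hpos) hle
      linarith
  have hstep : ∀ n : ℕ, α n ≤ α (n + 1) := by
    intro n
    have hpos : 0 < α n := lt_of_lt_of_le (by linarith) (hAn n)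
    have hk := key n hpos
    have hf0 : 0 ≤ Int.fract (θ (n + 1) - lam * α n ^ (n + 1)) := Int.fract_nonneg _
    have hdiv : 0 ≤ Int.fract (θ (n + 1) - lam * α n ^ (n + 1)) / lam :=
      div_nonneg hf0 hlam.le
    have hle : α n ^ (n + 1) ≤ α (n + 1) ^ (n + 1) := by
      rw [hk]; linarith
    exact le_of_pow_le_pow_left₀ (Nat.succ_ne_zero n) (hnne n hpos) hle
  refine ⟨monotone_nat_of_le_succ hstep, ?_⟩
  intro n m hm1 hmn
  have hbA : A ≤ α n := hAn n
  have hbpos : 0 < α n := lt_of_lt_of_le (by linarith) hbA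
  have hab : α n ≤ α (n + 1) := hstep n
  have heq := key n hbpos
  set f := Int.fract (θ (n + 1) - lam * α n ^ (n + 1)) with hfdef
  have hf0 : 0 ≤ f := Int.fract_nonneg _
  have hf1 : f < 1 := Int.fract_lt_one _
  set a := α (n + 1) with hadef
  set b := α n with hbdef
  set k := n + 1 - m with hkdef
  have hkm : k + m = n + 1 := by omega
  have hd0 : 0 ≤ a ^ m - b ^ m := by
    have := pow_le_pow_left₀ hbpos.le hab m
    linarith
  have h1 : b ^ k * a ^ m ≤ a ^ (n + 1) := by
    calc b ^ k * a ^ m ≤ a ^ k * a ^ m :=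
          mul_le_mul_of_nonneg_right (pow_le_pow_left₀ hbpos.le hab k) (pow_nonneg (hbpos.le.trans hab) m)
      _ = a ^ (n + 1) := by rw [← pow_add, hkm]
  have hbb : b ^ k * b ^ m = b ^ (n + 1) := by rw [← pow_add, hkm]
  have h2 : b ^ k * (a ^ m - b ^ m) ≤ f / lam := by nlinarith [h1, heq, hbb]
  have hAk : A ^ k ≤ b ^ k := pow_le_pow_left₀ (by linarith) hbA k
  have hfl : f / lam < lam⁻¹ := by
    rw [div_lt_iff₀ hlam, inv_mul_cancel₀ hlam.ne']
    exact hf1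
  have h3 : A ^ k * (a ^ m - b ^ m) < lam⁻¹ :=
    calc A ^ k * (a ^ m - b ^ m) ≤ b ^ k * (a ^ m - b ^ m) :=
          mul_le_mul_of_nonneg_right hAk hd0
      _ ≤ f / lam := h2
      _ < lam⁻¹ := hfl
  have hkz : ((m : ℤ) - n - 1) = -(k : ℤ) := by omega
  have hApow : A ^ ((m : ℤ) - n - 1) = (A ^ k)⁻¹ := by
    rw [hkz, zpow_neg, zpow_natCast]
  rw [hApow, ← div_eq_mul_inv, lt_div_iff₀ (pow_pos (by linarith : (0:ℝ) < A) k)]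
  linarith [h3]
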